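/- (Asymptotic converse.) Suppose the conditional Rényi entropy-rate H := lim_{n→∞} H_ᾱ(X^n|Y^n)/n exists and let R₁, R₂ > 0. For every sequence (Q_n) of stochastic encoders, where Q_n has hint sets ℳ₁⁽ⁿ⁾ of size ⌈2^{nR₁}⌉ and ℳ₂⁽ⁿ⁾ of size ⌈2^{nR₂}⌉, if lim_{n→∞} A_B^g(Q_n) = 1, then liminf_{n→∞} (1/n) log A_E(Q_n) ≤ ρ·min(R₁, R₂, H). -/

import Mathlib

open Real Finset Filter
open scoped Classical

noncomputable section

/-- `G` is a guessing function for `𝒳` given side-information in `W`: for each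
side-information value `w`, `x ↦ G x w` is a bijection from `𝒳` onto `{1, …, |𝒳|}`. -/
def IsGuessing {𝒳 W : Type*} [Fintype 𝒳] (G : 𝒳 → W → ℕ) : Prop :=
  ∀ w : W, (Function.Injective fun x => G x w) ∧
    ∀ x, G x w ∈ Finset.Icc 1 (Fintype.card 𝒳)

/-- `P` is a probability mass function on `𝒳 × 𝒴` (written in curried form). -/
def IsPMF {𝒳 𝒴 : Type*} [Fintype 𝒳] [Fintype 𝒴] (P : 𝒳 → 𝒴 → ℝ) : Prop :=
  (∀ x y, 0 ≤ P x y) ∧ ∑ x, ∑ y, P x y = 1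

/-- `Q` is a conditional PMF on `M` given `(x, y)`. -/
def IsCondPMF {𝒳 𝒴 M : Type*} [Fintype M] (Q : 𝒳 → 𝒴 → M → ℝ) : Prop :=
  ∀ x y, (∀ m, 0 ≤ Q x y m) ∧ ∑ m, Q x y m = 1

/-- Conditional Rényi entropy of order `α` (base-2 logarithms). -/
def condRenyi {𝒳 𝒴 : Type*} [Fintype 𝒳] [Fintype 𝒴] (α : ℝ) (P : 𝒳 → 𝒴 → ℝ) : ℝ :=
  (α / (1 - α)) * Real.logb 2 (∑ y, (∑ x, P x y ^ α) ^ (1 / α))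

/-- Bob's guessing ambiguity: the least `ρ`-th guessing moment over guessing
functions for `X` given `(Y, M₁, M₂)`. -/
def bobGuessAmb {𝒳 𝒴 M₁ M₂ : Type*} [Fintype 𝒳] [Fintype 𝒴] [Fintype M₁] [Fintype M₂]
    (ρ : ℝ) (P : 𝒳 → 𝒴 → ℝ) (Q : 𝒳 → 𝒴 → M₁ × M₂ → ℝ) : ℝ :=
  sInf { e | ∃ G : 𝒳 → 𝒴 × M₁ × M₂ → ℕ, IsGuessing G ∧
    e = ∑ x, ∑ y, ∑ m : M₁ × M₂, P x y * Q x y m * (G x (y, m) : ℝ) ^ ρ }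

/-- Eve's ambiguity: the least `ρ`-th moment of the minimum of two guessing
functions, one for `X` given `(Y, M₁)` and one for `X` given `(Y, M₂)`. -/
def eveAmb {𝒳 𝒴 M₁ M₂ : Type*} [Fintype 𝒳] [Fintype 𝒴] [Fintype M₁] [Fintype M₂]
    (ρ : ℝ) (P : 𝒳 → 𝒴 → ℝ) (Q : 𝒳 → 𝒴 → M₁ × M₂ → ℝ) : ℝ :=
  sInf { e | ∃ G₁ : 𝒳 → 𝒴 × M₁ → ℕ, ∃ G₂ : 𝒳 → 𝒴 × M₂ → ℕ,
    IsGuessing G₁ ∧ IsGuessing G₂ ∧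
    e = ∑ x, ∑ y, ∑ m : M₁ × M₂, P x y * Q x y m *
      ((min (G₁ x (y, m.1)) (G₂ x (y, m.2)) : ℕ) : ℝ) ^ ρ }

/-- Bob's list ambiguity: the `ρ`-th moment of the size of the list of all `x`
with positive posterior probability given `(Y, M₁, M₂)`. -/
def bobListAmb {𝒳 𝒴 M₁ M₂ : Type*} [Fintype 𝒳] [Fintype 𝒴] [Fintype M₁] [Fintype M₂]
    (ρ : ℝ) (P : 𝒳 → 𝒴 → ℝ) (Q : 𝒳 → 𝒴 → M₁ × M₂ → ℝ) : ℝ :=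
  ∑ x, ∑ y, ∑ m : M₁ × M₂, P x y * Q x y m *
    ((Finset.univ.filter fun x' => 0 < P x' y * Q x' y m).card : ℝ) ^ ρ
section Rank
variable {𝒳 β : Type*} [Fintype 𝒳] [LinearOrder β]

noncomputable def rnk (σ : 𝒳 → ℕ) (s : 𝒳 → β) (x : 𝒳) : ℕ :=
  (Finset.univ.filter fun x' => s x' < s x ∨ (s x' = s x ∧ σ x' ≤ σ x)).card

lemma one_le_rnk (σ : 𝒳 → ℕ) (s : 𝒳 → β) (x : 𝒳) : 1 ≤ rnk σ s x :=
  Finset.card_pos.mpr ⟨x, by simp [rnk]⟩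

lemma rnk_le_card (σ : 𝒳 → ℕ) (s : 𝒳 → β) (x : 𝒳) : rnk σ s x ≤ Fintype.card 𝒳 :=
  (Finset.card_filter_le _ _).trans_eq Finset.card_univ

lemma rnk_lt (σ : 𝒳 → ℕ) {s : 𝒳 → β} {x y : 𝒳}
    (h : s x < s y ∨ (s x = s y ∧ σ x < σ y)) : rnk σ s x < rnk σ s y := by
  apply Finset.card_lt_card
  rw [Finset.ssubset_iff_of_subset]
  · refine ⟨y, by simp, ?_⟩
    simp only [Finset.mem_filter, Finset.mem_univ, true_and, not_or, not_and]
    constructor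
    · rcases h with h3 | ⟨h3, _⟩
      · exact not_lt.mpr h3.le
      · exact not_lt.mpr h3.le
    · intro he
      rcases h with h3 | ⟨h3, h4⟩
      · exact absurd (he ▸ h3) (lt_irrefl _)
      · intro hle; exact absurd (hle.trans_lt h4) (lt_irrefl _)
  · intro x' hx'
    simp only [Finset.mem_filter, Finset.mem_univ, true_and] at *
    rcases hx' with h1 | ⟨h1, h2⟩
    · rcases h with h3 | ⟨h3, _⟩
      · exact Or.inl (h1.trans h3)
      · exact Or.inl (h3 ▸ h1)
    · rcases h with h3 | ⟨h3, h4⟩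
      · exact Or.inl (h1 ▸ h3)
      · exact Or.inr ⟨h1.trans h3, h2.trans h4.le⟩

lemma rnk_injective {σ : 𝒳 → ℕ} (hσ : Function.Injective σ) (s : 𝒳 → β) :
    Function.Injective (rnk σ s) := by
  intro x y hxy
  by_contra hne
  have hσne : σ x ≠ σ y := fun h => hne (hσ h)
  rcases lt_trichotomy (s x) (s y) with h | h | h
  · exact absurd hxy (rnk_lt σ (Or.inl h)).ne
  · rcases hσne.lt_or_gt with h2 | h2
    · exact absurd hxy (rnk_lt σ (Or.inr ⟨h, h2⟩)).ne
    · exact absurd hxy.symm (rnk_lt σ (Or.inr ⟨h.symm, h2⟩)).ne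
  · exact absurd hxy.symm (rnk_lt σ (Or.inl h)).ne

lemma rnk_le_count (σ : 𝒳 → ℕ) (s : 𝒳 → β) (x : 𝒳) :
    rnk σ s x ≤ (Finset.univ.filter fun x' => s x' ≤ s x).card := by
  apply Finset.card_le_card
  intro x' hx'
  simp only [Finset.mem_filter, Finset.mem_univ, true_and] at *
  rcases hx' with h | ⟨h, _⟩
  · exact h.le
  · exact h.le

lemma isGuessing_rnk {W : Type*} {σ : 𝒳 → ℕ} (hσ : Function.Injective σ) (t : W → 𝒳 → β) :
    IsGuessing (fun x w => rnk σ (t w) x) := fun w =>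
  ⟨rnk_injective hσ (t w), fun x =>
    Finset.mem_Icc.mpr ⟨one_le_rnk _ _ _, rnk_le_card _ _ _⟩⟩

/-- default injective labelling -/
def σ0 (𝒳 : Type*) [Fintype 𝒳] : 𝒳 → ℕ := fun x => ((Fintype.equivFin 𝒳) x : ℕ)

lemma σ0_injective (𝒳 : Type*) [Fintype 𝒳] : Function.Injective (σ0 𝒳) :=
  fun _ _ h => (Fintype.equivFin 𝒳).injective (Fin.val_injective h)

/-- key counting bound: rank by the min over `M₂` of injective guessing scores -/
lemma rnk_inf_le {M₂ : Type*} [Fintype M₂] [Nonempty M₂] (σ : 𝒳 → ℕ) (G : 𝒳 → M₂ → ℕ)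
    (hinj : ∀ m, Function.Injective fun x => G x m)
    (hmem : ∀ x m, G x m ∈ Finset.Icc 1 (Fintype.card 𝒳)) (x : 𝒳) (m₂ : M₂) :
    rnk σ (fun x' => Finset.univ.inf' Finset.univ_nonempty fun m => G x' m) x
      ≤ Fintype.card M₂ * G x m₂ := by
  set s : 𝒳 → ℕ := fun x' => Finset.univ.inf' Finset.univ_nonempty fun m => G x' m with hs
  have h1 : rnk σ s x ≤ (Finset.univ.filter fun x' => s x' ≤ s x).card := rnk_le_count σ s x
  have h2 : (Finset.univ.filter fun x' => s x' ≤ s x)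
      ⊆ Finset.univ.biUnion fun m => Finset.univ.filter fun x' => G x' m ≤ s x := by
    intro x' hx'
    simp only [Finset.mem_filter, Finset.mem_univ, true_and] at hx'
    obtain ⟨m, _, hm⟩ := (Finset.inf'_le_iff _).mp hx'
    simp only [Finset.mem_biUnion, Finset.mem_univ, Finset.mem_filter, true_and]
    exact ⟨m, hm⟩
  have h3 : ∀ m : M₂, (Finset.univ.filter fun x' => G x' m ≤ s x).card ≤ s x := by
    intro m
    have := Finset.card_le_card_of_injOn (fun x' => G x' m)
      (t := Finset.Icc 1 (s x)) (s := Finset.univ.filter fun x' => G x' m ≤ s x)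
      (fun a ha => by
        simp only [Finset.coe_filter, Finset.mem_coe, Finset.mem_filter, Finset.mem_univ, true_and, Set.mem_setOf_eq] at ha
        exact Finset.mem_Icc.mpr ⟨(Finset.mem_Icc.mp (hmem a m)).1, ha⟩)
      (fun a _ b _ hab => hinj m hab)
    simpa [Nat.card_Icc] using this
  calc rnk σ s x ≤ (Finset.univ.filter fun x' => s x' ≤ s x).card := h1
    _ ≤ ∑ m : M₂, (Finset.univ.filter fun x' => G x' m ≤ s x).card :=
        (Finset.card_le_card h2).trans Finset.card_biUnion_le
    _ ≤ ∑ _m : M₂, s x := Finset.sum_le_sum fun m _ => h3 m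
    _ = Fintype.card M₂ * s x := by simp [Finset.sum_const, Finset.card_univ, mul_comm]
    _ ≤ Fintype.card M₂ * G x m₂ :=
        Nat.mul_le_mul_left _ (Finset.inf'_le _ (Finset.mem_univ m₂))

end Rank

section Amb
variable {𝒳 𝒴 M₁ M₂ : Type*} [Fintype 𝒳] [Fintype 𝒴] [Fintype M₁] [Fintype M₂]
variable {ρ : ℝ} {P : 𝒳 → 𝒴 → ℝ} {Q : 𝒳 → 𝒴 → M₁ × M₂ → ℝ}

lemma sum_PQ_eq_one (hP : IsPMF P) (hQ : IsCondPMF Q) :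
    ∑ x, ∑ y, ∑ m : M₁ × M₂, P x y * Q x y m = 1 := by
  have h : ∀ x y, ∑ m : M₁ × M₂, P x y * Q x y m = P x y := by
    intro x y; rw [← Finset.mul_sum, (hQ x y).2, mul_one]
  simp only [h]; exact hP.2

lemma one_le_moment (hρ : 0 ≤ ρ) (hP : IsPMF P) (hQ : IsCondPMF Q)
    (g : 𝒳 → 𝒴 → M₁ × M₂ → ℕ) (hg : ∀ x y m, 1 ≤ g x y m) :
    1 ≤ ∑ x, ∑ y, ∑ m : M₁ × M₂, P x y * Q x y m * (g x y m : ℝ) ^ ρ := by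
  rw [← sum_PQ_eq_one hP hQ]
  refine Finset.sum_le_sum fun x _ => Finset.sum_le_sum fun y _ =>
    Finset.sum_le_sum fun m _ => ?_
  have h1 : (1:ℝ) ≤ (g x y m : ℝ) ^ ρ := by
    calc (1:ℝ) = 1 ^ ρ := (Real.one_rpow ρ).symm
      _ ≤ (g x y m : ℝ) ^ ρ := Real.rpow_le_rpow (by norm_num)
          (by exact_mod_cast hg x y m) hρ
  exact le_mul_of_one_le_right (mul_nonneg (hP.1 x y) ((hQ x y).1 m)) h1

lemma moment_nonneg (hP : ∀ x y, 0 ≤ P x y) (hQ0 : ∀ x y m, 0 ≤ Q x y m)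
    (g : 𝒳 → 𝒴 → M₁ × M₂ → ℝ) (hg : ∀ x y m, 0 ≤ g x y m) :
    0 ≤ ∑ x, ∑ y, ∑ m : M₁ × M₂, P x y * Q x y m * g x y m ^ ρ :=
  Finset.sum_nonneg fun x _ => Finset.sum_nonneg fun y _ =>
    Finset.sum_nonneg fun m _ => mul_nonneg (mul_nonneg (hP x y) (hQ0 x y m))
      (Real.rpow_nonneg (hg x y m) ρ)

lemma eveAmb_le (hP : ∀ x y, 0 ≤ P x y) (hQ0 : ∀ x y m, 0 ≤ Q x y m)
    {G₁ : 𝒳 → 𝒴 × M₁ → ℕ} {G₂ : 𝒳 → 𝒴 × M₂ → ℕ}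
    (h₁ : IsGuessing G₁) (h₂ : IsGuessing G₂) :
    eveAmb ρ P Q ≤ ∑ x, ∑ y, ∑ m : M₁ × M₂, P x y * Q x y m *
      ((min (G₁ x (y, m.1)) (G₂ x (y, m.2)) : ℕ) : ℝ) ^ ρ := by
  apply csInf_le
  · refine ⟨0, fun e he => ?_⟩
    obtain ⟨G₁', G₂', _, _, rfl⟩ := he
    exact moment_nonneg hP hQ0 _ fun x y m => by positivity
  · exact ⟨G₁, G₂, h₁, h₂, rfl⟩

lemma bob_set_nonempty :
    Set.Nonempty { e | ∃ G : 𝒳 → 𝒴 × M₁ × M₂ → ℕ, IsGuessing G ∧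
      e = ∑ x, ∑ y, ∑ m : M₁ × M₂, P x y * Q x y m * (G x (y, m) : ℝ) ^ ρ } :=
  ⟨_, ⟨fun x w => rnk (σ0 𝒳) ((fun _ _ => (0:ℕ)) w) x,
    isGuessing_rnk (σ0_injective 𝒳) _, rfl⟩⟩

lemma one_le_bobGuessAmb (hρ : 0 ≤ ρ) (hP : IsPMF P) (hQ : IsCondPMF Q) :
    1 ≤ bobGuessAmb ρ P Q := by
  refine le_csInf bob_set_nonempty fun e he => ?_
  obtain ⟨G, hG, rfl⟩ := he
  exact one_le_moment hρ hP hQ (fun x y m => G x (y, m))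
    (fun x y m => (Finset.mem_Icc.mp ((hG (y, m)).2 x)).1)

lemma one_le_eveAmb (hρ : 0 ≤ ρ) (hP : IsPMF P) (hQ : IsCondPMF Q) :
    1 ≤ eveAmb ρ P Q := by
  refine le_csInf ?_ fun e he => ?_
  · exact ⟨_, ⟨fun x w => rnk (σ0 𝒳) ((fun _ _ => (0:ℕ)) w) x,
      fun x w => rnk (σ0 𝒳) ((fun _ _ => (0:ℕ)) w) x,
      isGuessing_rnk (σ0_injective 𝒳) _, isGuessing_rnk (σ0_injective 𝒳) _, rfl⟩⟩
  · obtain ⟨G₁, G₂, h₁, h₂, rfl⟩ := he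
    refine one_le_moment hρ hP hQ (fun x y m => min (G₁ x (y, m.1)) (G₂ x (y, m.2)))
      fun x y m => le_min ?_ ?_
    · exact (Finset.mem_Icc.mp ((h₁ (y, m.1)).2 x)).1
    · exact (Finset.mem_Icc.mp ((h₂ (y, m.2)).2 x)).1

end Amb

section Renyi
variable {𝒳 𝒴 M₁ M₂ : Type*} [Fintype 𝒳] [Fintype 𝒴] [Fintype M₁] [Fintype M₂]
variable {ρ : ℝ} {P : 𝒳 → 𝒴 → ℝ} {Q : 𝒳 → 𝒴 → M₁ × M₂ → ℝ}

lemma guess_moment_le (hρ : 0 < ρ) (p : 𝒳 → ℝ) (hp : ∀ x, 0 ≤ p x) :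
    ∑ x, p x * (rnk (σ0 𝒳) (fun x' => -p x') x : ℝ) ^ ρ
      ≤ (∑ x, p x ^ ((1:ℝ)/(1+ρ))) ^ (1+ρ) := by
  have h1ρ : (0:ℝ) < 1 + ρ := by linarith
  set a : ℝ := 1/(1+ρ) with ha
  have hapos : 0 < a := by positivity
  have hsum : a * ρ + a = 1 := by
    rw [ha, div_mul_eq_mul_div, one_mul, ← add_div, div_eq_one_iff_eq h1ρ.ne']; ring
  set T : ℝ := ∑ x, p x ^ a with hT
  have hT0 : 0 ≤ T := Finset.sum_nonneg fun x _ => Real.rpow_nonneg (hp x) a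
  rcases eq_or_lt_of_le hT0 with hTeq | hTpos
  · have hz : ∀ x ∈ Finset.univ, p x ^ a = 0 :=
      (Finset.sum_eq_zero_iff_of_nonneg fun x _ => Real.rpow_nonneg (hp x) a).mp hTeq.symm
    have hz' : ∀ x, p x = 0 := fun x =>
      (Real.rpow_eq_zero (hp x) hapos.ne').mp (hz x (Finset.mem_univ x))
    have hTz : T = 0 := hTeq.symm
    rw [hTz, Real.zero_rpow h1ρ.ne']
    apply le_of_eq
    refine Finset.sum_eq_zero fun x _ => by rw [hz' x, zero_mul]
  · have key : ∀ x, p x * (rnk (σ0 𝒳) (fun x' => -p x') x : ℝ) ^ ρ ≤ p x ^ a * T ^ ρ := by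
      intro x
      rcases eq_or_lt_of_le (hp x) with hx0 | hx0
      · rw [← hx0, zero_mul]
        positivity
      · have h1 : rnk (σ0 𝒳) (fun x' => -p x') x
            ≤ (Finset.univ.filter fun x' => p x ≤ p x').card := by
          have h := rnk_le_count (σ0 𝒳) (fun x' => -p x') x
          simpa [neg_le_neg_iff] using h
        have hcount : ((rnk (σ0 𝒳) (fun x' => -p x') x : ℕ) : ℝ) * p x ^ a ≤ T := by
          calc ((rnk (σ0 𝒳) (fun x' => -p x') x : ℕ) : ℝ) * p x ^ a
              ≤ ((Finset.univ.filter fun x' => p x ≤ p x').card : ℝ) * p x ^ a := by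
                have hnn := Real.rpow_nonneg (hp x) a
                gcongr
            _ = ∑ _x' ∈ Finset.univ.filter fun x' => p x ≤ p x', p x ^ a := by
                rw [Finset.sum_const, nsmul_eq_mul]
            _ ≤ ∑ x' ∈ Finset.univ.filter fun x' => p x ≤ p x', p x' ^ a := by
                refine Finset.sum_le_sum fun x' hx' => ?_
                exact Real.rpow_le_rpow (hp x)
                  (Finset.mem_filter.mp hx').2 hapos.le
            _ ≤ T := Finset.sum_le_sum_of_subset_of_nonneg
                (Finset.filter_subset _ _)
                (fun x' _ _ => Real.rpow_nonneg (hp x') a)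
        have h2 : ((rnk (σ0 𝒳) (fun x' => -p x') x : ℕ) : ℝ) ^ ρ * p x ^ (a * ρ) ≤ T ^ ρ := by
          have h3 := Real.rpow_le_rpow (by positivity) hcount hρ.le
          rwa [Real.mul_rpow (by positivity) (Real.rpow_nonneg (hp x) a),
            ← Real.rpow_mul (hp x)] at h3
        calc p x * (rnk (σ0 𝒳) (fun x' => -p x') x : ℝ) ^ ρ
            = (rnk (σ0 𝒳) (fun x' => -p x') x : ℝ) ^ ρ * p x ^ (a * ρ) * p x ^ a := by
              rw [mul_assoc, ← Real.rpow_add hx0, hsum, Real.rpow_one, mul_comm]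
          _ ≤ T ^ ρ * p x ^ a :=
              mul_le_mul_of_nonneg_right h2 (Real.rpow_nonneg (hp x) a)
          _ = p x ^ a * T ^ ρ := mul_comm _ _
    calc ∑ x, p x * (rnk (σ0 𝒳) (fun x' => -p x') x : ℝ) ^ ρ
        ≤ ∑ x, p x ^ a * T ^ ρ := Finset.sum_le_sum fun x _ => key x
      _ = T * T ^ ρ := by rw [← Finset.sum_mul]
      _ = T ^ (1 + ρ) := by rw [Real.rpow_add hTpos, Real.rpow_one]

lemma eve_le_renyi (hρ : 0 < ρ) (hP : IsPMF P) (hQ : IsCondPMF Q) :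
    eveAmb ρ P Q ≤ ∑ y, (∑ x, P x y ^ ((1:ℝ)/(1+ρ))) ^ (1+ρ) := by
  have h₁ : IsGuessing (fun (x : 𝒳) (w : 𝒴 × M₁) => rnk (σ0 𝒳) (fun x' => -P x' w.1) x) :=
    isGuessing_rnk (σ0_injective 𝒳) fun (w : 𝒴 × M₁) x' => -P x' w.1
  have h₂ : IsGuessing (fun (x : 𝒳) (_ : 𝒴 × M₂) => rnk (σ0 𝒳) (fun _ => (0:ℕ)) x) :=
    isGuessing_rnk (σ0_injective 𝒳) fun _ _ => (0:ℕ)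
  calc eveAmb ρ P Q
      ≤ ∑ x, ∑ y, ∑ m : M₁ × M₂, P x y * Q x y m *
        ((min (rnk (σ0 𝒳) (fun x' => -P x' y) x) (rnk (σ0 𝒳) (fun _ => (0:ℕ)) x) : ℕ) : ℝ) ^ ρ :=
        eveAmb_le (G₁ := fun x w => rnk (σ0 𝒳) (fun x' => -P x' w.1) x)
          (G₂ := fun x _ => rnk (σ0 𝒳) (fun _ => (0:ℕ)) x)
          hP.1 (fun x y m => (hQ x y).1 m) h₁ h₂
    _ ≤ ∑ x, ∑ y, ∑ m : M₁ × M₂, P x y * Q x y m *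
        ((rnk (σ0 𝒳) (fun x' => -P x' y) x : ℕ) : ℝ) ^ ρ := by
        refine Finset.sum_le_sum fun x _ => Finset.sum_le_sum fun y _ =>
          Finset.sum_le_sum fun m _ => ?_
        have hle : ((min (rnk (σ0 𝒳) (fun x' => -P x' y) x) (rnk (σ0 𝒳) (fun _ => (0:ℕ)) x) : ℕ) : ℝ)
            ≤ ((rnk (σ0 𝒳) (fun x' => -P x' y) x : ℕ) : ℝ) := by
          exact_mod_cast min_le_left _ _
        have := Real.rpow_le_rpow (by positivity) hle hρ.le
        exact mul_le_mul_of_nonneg_left this (mul_nonneg (hP.1 x y) ((hQ x y).1 m))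
    _ = ∑ x, ∑ y, P x y * ((rnk (σ0 𝒳) (fun x' => -P x' y) x : ℕ) : ℝ) ^ ρ := by
        refine Finset.sum_congr rfl fun x _ => Finset.sum_congr rfl fun y _ => ?_
        rw [show ∀ c : ℝ, ∑ m : M₁ × M₂, P x y * Q x y m * c = P x y * c * ∑ m : M₁ × M₂, Q x y m
          from fun c => by rw [Finset.mul_sum]; exact Finset.sum_congr rfl fun m _ => by ring,
          (hQ x y).2, mul_one]
    _ = ∑ y, ∑ x, P x y * ((rnk (σ0 𝒳) (fun x' => -P x' y) x : ℕ) : ℝ) ^ ρ := Finset.sum_comm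
    _ ≤ ∑ y, (∑ x, P x y ^ ((1:ℝ)/(1+ρ))) ^ (1+ρ) :=
        Finset.sum_le_sum fun y _ => guess_moment_le hρ (fun x => P x y) (fun x => hP.1 x y)

end Renyi

section Interleave
variable {𝒳 𝒴 M₁ M₂ : Type*} [Fintype 𝒳] [Fintype 𝒴] [Fintype M₁] [Fintype M₂]
variable {ρ : ℝ} {P : 𝒳 → 𝒴 → ℝ} {Q : 𝒳 → 𝒴 → M₁ × M₂ → ℝ}

lemma eve_le_card_mul_bob₂ [Nonempty M₂] (hρ : 0 < ρ) (hP : IsPMF P) (hQ : IsCondPMF Q) :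
    eveAmb ρ P Q ≤ (Fintype.card M₂ : ℝ) ^ ρ * bobGuessAmb ρ P Q := by
  have hcpos : (0:ℝ) < (Fintype.card M₂ : ℝ) ^ ρ := by
    have := Fintype.card_pos (α := M₂)
    positivity
  refine le_of_forall_pos_le_add fun ε hε => ?_
  have hδ : 0 < ε / (Fintype.card M₂ : ℝ) ^ ρ := div_pos hε hcpos
  obtain ⟨e, he, helt⟩ := exists_lt_of_csInf_lt (bob_set_nonempty (ρ := ρ) (P := P) (Q := Q))
    (lt_add_of_pos_right (bobGuessAmb ρ P Q) hδ)
  obtain ⟨GB, hGB, rfl⟩ := he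
  have h₁ : IsGuessing (fun (x : 𝒳) (w : 𝒴 × M₁) => rnk (σ0 𝒳)
      (fun x' => Finset.univ.inf' Finset.univ_nonempty fun m₂ => GB x' (w.1, w.2, m₂)) x) :=
    isGuessing_rnk (σ0_injective 𝒳) _
  have h₂ : IsGuessing (fun (x : 𝒳) (_ : 𝒴 × M₂) => rnk (σ0 𝒳) (fun _ => (0:ℕ)) x) :=
    isGuessing_rnk (σ0_injective 𝒳) fun _ _ => (0:ℕ)
  calc eveAmb ρ P Q
      ≤ ∑ x, ∑ y, ∑ m : M₁ × M₂, P x y * Q x y m *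
        ((min (rnk (σ0 𝒳) (fun x' => Finset.univ.inf' Finset.univ_nonempty
            fun m₂ => GB x' (y, m.1, m₂)) x) (rnk (σ0 𝒳) (fun _ => (0:ℕ)) x) : ℕ) : ℝ) ^ ρ :=
        eveAmb_le (G₁ := fun x w => rnk (σ0 𝒳)
            (fun x' => Finset.univ.inf' Finset.univ_nonempty fun m₂ => GB x' (w.1, w.2, m₂)) x)
          (G₂ := fun x _ => rnk (σ0 𝒳) (fun _ => (0:ℕ)) x)
          hP.1 (fun x y m => (hQ x y).1 m) h₁ h₂
    _ ≤ ∑ x, ∑ y, ∑ m : M₁ × M₂, P x y * Q x y m *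
        ((Fintype.card M₂ : ℝ) ^ ρ * (GB x (y, m) : ℝ) ^ ρ) := by
        refine Finset.sum_le_sum fun x _ => Finset.sum_le_sum fun y _ =>
          Finset.sum_le_sum fun m _ => ?_
        have hnat : min (rnk (σ0 𝒳) (fun x' => Finset.univ.inf' Finset.univ_nonempty
              fun m₂ => GB x' (y, m.1, m₂)) x) (rnk (σ0 𝒳) (fun _ => (0:ℕ)) x)
            ≤ Fintype.card M₂ * GB x (y, m) := by
          refine (min_le_left _ _).trans ?_
          have := rnk_inf_le (σ0 𝒳) (fun x' m₂ => GB x' (y, m.1, m₂))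
            (fun m₂ => (hGB (y, m.1, m₂)).1) (fun x' m₂ => (hGB (y, m.1, m₂)).2 x') x m.2
          simpa using this
        have hr : ((min (rnk (σ0 𝒳) (fun x' => Finset.univ.inf' Finset.univ_nonempty
              fun m₂ => GB x' (y, m.1, m₂)) x) (rnk (σ0 𝒳) (fun _ => (0:ℕ)) x) : ℕ) : ℝ) ^ ρ
            ≤ ((Fintype.card M₂ * GB x (y, m) : ℕ) : ℝ) ^ ρ :=
          Real.rpow_le_rpow (by positivity) (by exact_mod_cast hnat) hρ.le
        refine (mul_le_mul_of_nonneg_left hr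
          (mul_nonneg (hP.1 x y) ((hQ x y).1 m))).trans ?_
        rw [Nat.cast_mul, Real.mul_rpow (by positivity) (by positivity)]
    _ = (Fintype.card M₂ : ℝ) ^ ρ *
        ∑ x, ∑ y, ∑ m : M₁ × M₂, P x y * Q x y m * (GB x (y, m) : ℝ) ^ ρ := by
        simp only [Finset.mul_sum]
        refine Finset.sum_congr rfl fun x _ => Finset.sum_congr rfl fun y _ =>
          Finset.sum_congr rfl fun m _ => by ring
    _ ≤ (Fintype.card M₂ : ℝ) ^ ρ *
        (bobGuessAmb ρ P Q + ε / (Fintype.card M₂ : ℝ) ^ ρ) :=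
        mul_le_mul_of_nonneg_left helt.le hcpos.le
    _ = (Fintype.card M₂ : ℝ) ^ ρ * bobGuessAmb ρ P Q + ε := by
        rw [mul_add, mul_div_cancel₀ _ hcpos.ne']

lemma eve_le_card_mul_bob₁ [Nonempty M₁] (hρ : 0 < ρ) (hP : IsPMF P) (hQ : IsCondPMF Q) :
    eveAmb ρ P Q ≤ (Fintype.card M₁ : ℝ) ^ ρ * bobGuessAmb ρ P Q := by
  have hcpos : (0:ℝ) < (Fintype.card M₁ : ℝ) ^ ρ := by
    have := Fintype.card_pos (α := M₁)
    positivity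
  refine le_of_forall_pos_le_add fun ε hε => ?_
  have hδ : 0 < ε / (Fintype.card M₁ : ℝ) ^ ρ := div_pos hε hcpos
  obtain ⟨e, he, helt⟩ := exists_lt_of_csInf_lt (bob_set_nonempty (ρ := ρ) (P := P) (Q := Q))
    (lt_add_of_pos_right (bobGuessAmb ρ P Q) hδ)
  obtain ⟨GB, hGB, rfl⟩ := he
  have h₂ : IsGuessing (fun (x : 𝒳) (w : 𝒴 × M₂) => rnk (σ0 𝒳)
      (fun x' => Finset.univ.inf' Finset.univ_nonempty fun m₁ => GB x' (w.1, m₁, w.2)) x) :=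
    isGuessing_rnk (σ0_injective 𝒳) _
  have h₁ : IsGuessing (fun (x : 𝒳) (_ : 𝒴 × M₁) => rnk (σ0 𝒳) (fun _ => (0:ℕ)) x) :=
    isGuessing_rnk (σ0_injective 𝒳) fun _ _ => (0:ℕ)
  calc eveAmb ρ P Q
      ≤ ∑ x, ∑ y, ∑ m : M₁ × M₂, P x y * Q x y m *
        ((min (rnk (σ0 𝒳) (fun _ => (0:ℕ)) x) (rnk (σ0 𝒳)
          (fun x' => Finset.univ.inf' Finset.univ_nonempty
            fun m₁ => GB x' (y, m₁, m.2)) x) : ℕ) : ℝ) ^ ρ :=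
        eveAmb_le (G₁ := fun x _ => rnk (σ0 𝒳) (fun _ => (0:ℕ)) x)
          (G₂ := fun x w => rnk (σ0 𝒳)
            (fun x' => Finset.univ.inf' Finset.univ_nonempty fun m₁ => GB x' (w.1, m₁, w.2)) x)
          hP.1 (fun x y m => (hQ x y).1 m) h₁ h₂
    _ ≤ ∑ x, ∑ y, ∑ m : M₁ × M₂, P x y * Q x y m *
        ((Fintype.card M₁ : ℝ) ^ ρ * (GB x (y, m) : ℝ) ^ ρ) := by
        refine Finset.sum_le_sum fun x _ => Finset.sum_le_sum fun y _ =>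
          Finset.sum_le_sum fun m _ => ?_
        have hnat : min (rnk (σ0 𝒳) (fun _ => (0:ℕ)) x) (rnk (σ0 𝒳)
              (fun x' => Finset.univ.inf' Finset.univ_nonempty
                fun m₁ => GB x' (y, m₁, m.2)) x)
            ≤ Fintype.card M₁ * GB x (y, m) := by
          refine (min_le_right _ _).trans ?_
          have := rnk_inf_le (σ0 𝒳) (fun x' m₁ => GB x' (y, m₁, m.2))
            (fun m₁ => (hGB (y, m₁, m.2)).1) (fun x' m₁ => (hGB (y, m₁, m.2)).2 x') x m.1
          simpa using this
        have hr : ((min (rnk (σ0 𝒳) (fun _ => (0:ℕ)) x) (rnk (σ0 𝒳)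
              (fun x' => Finset.univ.inf' Finset.univ_nonempty
                fun m₁ => GB x' (y, m₁, m.2)) x) : ℕ) : ℝ) ^ ρ
            ≤ ((Fintype.card M₁ * GB x (y, m) : ℕ) : ℝ) ^ ρ :=
          Real.rpow_le_rpow (by positivity) (by exact_mod_cast hnat) hρ.le
        refine (mul_le_mul_of_nonneg_left hr
          (mul_nonneg (hP.1 x y) ((hQ x y).1 m))).trans ?_
        rw [Nat.cast_mul, Real.mul_rpow (by positivity) (by positivity)]
    _ = (Fintype.card M₁ : ℝ) ^ ρ *
        ∑ x, ∑ y, ∑ m : M₁ × M₂, P x y * Q x y m * (GB x (y, m) : ℝ) ^ ρ := by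
        simp only [Finset.mul_sum]
        refine Finset.sum_congr rfl fun x _ => Finset.sum_congr rfl fun y _ =>
          Finset.sum_congr rfl fun m _ => by ring
    _ ≤ (Fintype.card M₁ : ℝ) ^ ρ *
        (bobGuessAmb ρ P Q + ε / (Fintype.card M₁ : ℝ) ^ ρ) :=
        mul_le_mul_of_nonneg_left helt.le hcpos.le
    _ = (Fintype.card M₁ : ℝ) ^ ρ * bobGuessAmb ρ P Q + ε := by
        rw [mul_add, mul_div_cancel₀ _ hcpos.ne']

end Interleave

theorem asymptotic_converse
    {𝒳 𝒴 : Type*} [Fintype 𝒳] [Fintype 𝒴] [Nonempty 𝒳] [Nonempty 𝒴]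
    (ρ : ℝ) (hρ : 0 < ρ)
    (P : ∀ n : ℕ, (Fin n → 𝒳) → (Fin n → 𝒴) → ℝ) (hP : ∀ n, IsPMF (P n))
    (H : ℝ)
    (hH : Filter.Tendsto (fun n => condRenyi (1 / (1 + ρ)) (P n) / n)
      Filter.atTop (nhds H))
    (R₁ R₂ : ℝ) (hR₁ : 0 < R₁) (hR₂ : 0 < R₂)
    (Q : ∀ n : ℕ, (Fin n → 𝒳) → (Fin n → 𝒴) →
      Fin ⌈(2 : ℝ) ^ ((n : ℝ) * R₁)⌉₊ × Fin ⌈(2 : ℝ) ^ ((n : ℝ) * R₂)⌉₊ → ℝ)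
    (hQ : ∀ n, IsCondPMF (Q n))
    (hBob : Filter.Tendsto (fun n => bobGuessAmb ρ (P n) (Q n)) Filter.atTop (nhds 1)) :
    Filter.liminf (fun n => Real.logb 2 (eveAmb ρ (P n) (Q n)) / n) Filter.atTop ≤
      ρ * min R₁ (min R₂ H) := by
  have h2 : (1:ℝ) < 2 := one_lt_two
  have h1ρ : (0:ℝ) < 1 + ρ := by linarith
  haveI inst1 : ∀ n : ℕ, Nonempty (Fin ⌈(2 : ℝ) ^ ((n : ℝ) * R₁)⌉₊) := fun n =>
    ⟨⟨0, Nat.ceil_pos.mpr (by positivity)⟩⟩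
  haveI inst2 : ∀ n : ℕ, Nonempty (Fin ⌈(2 : ℝ) ^ ((n : ℝ) * R₂)⌉₊) := fun n =>
    ⟨⟨0, Nat.ceil_pos.mpr (by positivity)⟩⟩
  set f : ℕ → ℝ := fun n => Real.logb 2 (eveAmb ρ (P n) (Q n)) / n with hf
  have hA1 : ∀ n, 1 ≤ eveAmb ρ (P n) (Q n) := fun n => one_le_eveAmb hρ.le (hP n) (hQ n)
  have hf0 : ∀ n, 0 ≤ f n := fun n =>
    div_nonneg (Real.logb_nonneg h2 (hA1 n)) (Nat.cast_nonneg n)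
  have hbdd : Filter.IsBoundedUnder (· ≥ ·) Filter.atTop f :=
    Filter.isBoundedUnder_of ⟨0, fun n => hf0 n⟩
  have key : ∀ c : ℝ, (∀ ε : ℝ, 0 < ε → ∀ᶠ n in Filter.atTop, f n ≤ c + ε) →
      Filter.liminf f Filter.atTop ≤ c := by
    intro c h
    refine le_of_forall_pos_le_add fun ε hε => ?_
    exact Filter.liminf_le_of_frequently_le ((h ε hε).frequently) hbdd
  have goal_eq : ρ * min R₁ (min R₂ H) = min (ρ * R₁) (min (ρ * R₂) (ρ * H)) := by
    rw [mul_min_of_nonneg _ _ hρ.le, mul_min_of_nonneg _ _ hρ.le]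
  rw [goal_eq]
  -- common bound for the message-rate cases
  have hBpos : ∀ n, (0:ℝ) < bobGuessAmb ρ (P n) (Q n) := fun n =>
    lt_of_lt_of_le one_pos (one_le_bobGuessAmb hρ.le (hP n) (hQ n))
  have rate_bound : ∀ (R : ℝ), 0 < R →
      (∀ n : ℕ, eveAmb ρ (P n) (Q n) ≤
        ((⌈(2 : ℝ) ^ ((n : ℝ) * R)⌉₊ : ℝ)) ^ ρ * bobGuessAmb ρ (P n) (Q n)) →
      Filter.liminf f Filter.atTop ≤ ρ * R := by
    intro R hR hbound
    refine key _ fun ε hε => ?_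
    filter_upwards [hBob.eventually_lt_const h2, Filter.eventually_ge_atTop 1,
      ((tendsto_const_div_atTop_nhds_zero_nat (ρ + 1)).eventually
        (eventually_le_nhds hε))] with n hB2 hn1 hdiv
    have hnpos : (0:ℝ) < n := by exact_mod_cast hn1
    have hcR : (0:ℝ) < (⌈(2 : ℝ) ^ ((n : ℝ) * R)⌉₊ : ℝ) := by
      have : 0 < ⌈(2 : ℝ) ^ ((n : ℝ) * R)⌉₊ := Nat.ceil_pos.mpr (by positivity)
      exact_mod_cast this
    set c : ℝ := (⌈(2 : ℝ) ^ ((n : ℝ) * R)⌉₊ : ℝ) with hc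
    have hApos : (0:ℝ) < eveAmb ρ (P n) (Q n) := lt_of_lt_of_le one_pos (hA1 n)
    have hRHSpos : (0:ℝ) < c ^ ρ * bobGuessAmb ρ (P n) (Q n) :=
      mul_pos (Real.rpow_pos_of_pos hcR ρ) (hBpos n)
    have hlogA : Real.logb 2 (eveAmb ρ (P n) (Q n)) ≤
        ρ * Real.logb 2 c + Real.logb 2 (bobGuessAmb ρ (P n) (Q n)) := by
      have h1 := (Real.logb_le_logb h2 hApos hRHSpos).mpr (hbound n)
      rwa [Real.logb_mul (Real.rpow_pos_of_pos hcR ρ).ne' (hBpos n).ne',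
        show Real.logb 2 (c ^ ρ) = ρ * Real.logb 2 c by
          unfold Real.logb; rw [Real.log_rpow hcR]; ring] at h1
    have hlogc : Real.logb 2 c ≤ (n : ℝ) * R + 1 := by
      have hle : c ≤ 2 * (2 : ℝ) ^ ((n : ℝ) * R) := by
        have h1 := (Nat.ceil_lt_add_one (a := (2 : ℝ) ^ ((n : ℝ) * R)) (by positivity)).le
        have h2' : (1:ℝ) ≤ (2 : ℝ) ^ ((n : ℝ) * R) :=
          Real.one_le_rpow one_le_two (by positivity)
        calc c ≤ (2 : ℝ) ^ ((n : ℝ) * R) + 1 := h1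
          _ ≤ 2 * (2 : ℝ) ^ ((n : ℝ) * R) := by linarith
      calc Real.logb 2 c ≤ Real.logb 2 (2 * (2 : ℝ) ^ ((n : ℝ) * R)) :=
            (Real.logb_le_logb h2 hcR (by positivity)).mpr hle
        _ = (n : ℝ) * R + 1 := by
            rw [Real.logb_mul two_ne_zero (by positivity),
              Real.logb_self_eq_one h2, Real.logb_rpow two_pos (by norm_num)]
            ring
    have hlogB : Real.logb 2 (bobGuessAmb ρ (P n) (Q n)) ≤ 1 := by
      calc Real.logb 2 (bobGuessAmb ρ (P n) (Q n)) ≤ Real.logb 2 2 :=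
            (Real.logb_le_logb h2 (hBpos n) two_pos).mpr hB2.le
        _ = 1 := Real.logb_self_eq_one h2
    have : f n ≤ (ρ * ((n : ℝ) * R + 1) + 1) / n := by
      have hnum : Real.logb 2 (eveAmb ρ (P n) (Q n)) ≤ ρ * ((n : ℝ) * R + 1) + 1 := by
        calc Real.logb 2 (eveAmb ρ (P n) (Q n))
            ≤ ρ * Real.logb 2 c + Real.logb 2 (bobGuessAmb ρ (P n) (Q n)) := hlogA
          _ ≤ ρ * ((n : ℝ) * R + 1) + 1 := by
              have := mul_le_mul_of_nonneg_left hlogc hρ.le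
              linarith
      show Real.logb 2 (eveAmb ρ (P n) (Q n)) / n ≤ (ρ * ((n : ℝ) * R + 1) + 1) / n
      gcongr
    calc f n ≤ (ρ * ((n : ℝ) * R + 1) + 1) / n := this
      _ = ρ * R + (ρ + 1) / n := by field_simp; ring
      _ ≤ ρ * R + ε := by linarith
  refine le_min ?_ (le_min ?_ ?_)
  · refine rate_bound R₁ hR₁ fun n => ?_
    haveI := inst1 n; haveI := inst2 n
    have h := eve_le_card_mul_bob₁ (M₁ := Fin ⌈(2 : ℝ) ^ ((n : ℝ) * R₁)⌉₊)
      (M₂ := Fin ⌈(2 : ℝ) ^ ((n : ℝ) * R₂)⌉₊) hρ (hP n) (hQ n)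
    simpa [Fintype.card_fin] using h
  · refine rate_bound R₂ hR₂ fun n => ?_
    haveI := inst1 n; haveI := inst2 n
    have h := eve_le_card_mul_bob₂ (M₁ := Fin ⌈(2 : ℝ) ^ ((n : ℝ) * R₁)⌉₊)
      (M₂ := Fin ⌈(2 : ℝ) ^ ((n : ℝ) * R₂)⌉₊) hρ (hP n) (hQ n)
    simpa [Fintype.card_fin] using h
  · -- Rényi bound
    refine key _ fun ε hε => ?_
    filter_upwards [((hH.const_mul ρ).eventually
        (eventually_le_nhds (lt_add_of_pos_right (ρ * H) hε))),
      Filter.eventually_ge_atTop 1] with n hcond hn1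
    have hnpos : (0:ℝ) < n := by exact_mod_cast hn1
    set Z : ℝ := ∑ y, (∑ x, P n x y ^ ((1:ℝ)/(1+ρ))) ^ (1+ρ) with hZ
    have hAZ : eveAmb ρ (P n) (Q n) ≤ Z := eve_le_renyi hρ (hP n) (hQ n)
    have hZ1 : (1:ℝ) ≤ Z := (hA1 n).trans hAZ
    have hlog : Real.logb 2 (eveAmb ρ (P n) (Q n)) ≤ Real.logb 2 Z :=
      (Real.logb_le_logb h2 (lt_of_lt_of_le one_pos (hA1 n)) (lt_of_lt_of_le one_pos hZ1)).mpr hAZ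
    have hcondZ : ρ * condRenyi (1 / (1 + ρ)) (P n) = Real.logb 2 Z := by
      rw [condRenyi, one_div_one_div]
      rw [show (1:ℝ) - 1 / (1 + ρ) = ρ / (1 + ρ) by field_simp; ring]
      rw [← hZ]
      have hco : ρ * ((1:ℝ)/(1+ρ) / (ρ/(1+ρ))) = 1 := by
        rw [div_div_div_cancel_right₀]
        · field_simp
        · exact h1ρ.ne'
      rw [← mul_assoc]
      rw [mul_comm (ρ * (1 / (1 + ρ) / (ρ / (1 + ρ))))]
      rw [show ρ * (1 / (1 + ρ) / (ρ / (1 + ρ))) = 1 from hco, mul_one]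
    have hfn : f n ≤ ρ * (condRenyi (1 / (1 + ρ)) (P n) / n) := by
      have hlog2 : Real.logb 2 (eveAmb ρ (P n) (Q n)) ≤ ρ * condRenyi (1 / (1 + ρ)) (P n) :=
        hlog.trans_eq hcondZ.symm
      calc f n ≤ ρ * condRenyi (1 / (1 + ρ)) (P n) / n := by
            show Real.logb 2 (eveAmb ρ (P n) (Q n)) / n ≤ _
            gcongr
        _ = ρ * (condRenyi (1 / (1 + ρ)) (P n) / n) := by ring
    exact hfn.trans hcond
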